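/- Let G be a finite nonabelian TC-group, i.e., for all noncentral g, h, k ∈ G, if g commutes with h and h commutes with k then g commutes with k. Let m be the number of conjugacy classes of G. Then nc(G)·(nc(G)-1) + |G|·(|G|-m) - 2·(nc(G)-1)·(|G|-|Z(G)|) ≥ 0 as integers. -/

import Mathlib

/-- `nc G` is the maximum size of a set of nontrivial pairwise non-commuting
elements of `G`. -/
noncomputable def nc (G : Type*) [Group G] : ℕ :=
  sSup {n : ℕ | ∃ S : Finset G, S.card = n ∧ (∀ x ∈ S, x ≠ 1) ∧
    ∀ x ∈ S, ∀ y ∈ S, x ≠ y → x * y ≠ y * x}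

open Finset

private def ncSetoid {G : Type*} [Group G]
    (htc : ∀ g h k : G, g ∉ Subgroup.center G → h ∉ Subgroup.center G →
      k ∉ Subgroup.center G → g * h = h * g → h * k = k * h → g * k = k * g) :
    Setoid {x : G // x ∉ Subgroup.center G} :=
  ⟨fun x y => (x : G) * y = y * x,
   ⟨fun _ => rfl, fun h => h.symm,
    fun {x y z} hxy hyz => htc _ _ _ x.2 y.2 z.2 hxy hyz⟩⟩

/-- Convexity bound: for positive integers summing to `S` indexed by a `k`-element
type, the sum of squares is at most `S² - 2(k-1)S + k(k-1)`. -/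
private theorem sum_sq_bound {Q : Type*} [Fintype Q] [DecidableEq Q] (d : Q → ℤ) (hd : ∀ q, 1 ≤ d q) :
    ∑ q, d q * d q ≤ (∑ q, d q) * (∑ q, d q)
      - 2 * ((Fintype.card Q : ℤ) - 1) * (∑ q, d q)
      + (Fintype.card Q : ℤ) * ((Fintype.card Q : ℤ) - 1) := by
  set S : ℤ := ∑ q, d q with hS
  set k : ℤ := (Fintype.card Q : ℤ) with hk
  have hsub : ∑ q, (d q - 1) = S - k := by
    rw [Finset.sum_sub_distrib, Finset.sum_const, Finset.card_univ]
    simp [hk, hS]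
  have hbound : ∀ q : Q, d q ≤ S - (k - 1) := by
    intro q
    have h1 : ((Finset.univ.erase q).card : ℤ) • (1:ℤ) ≤ ∑ x ∈ Finset.univ.erase q, d x := by
      have := Finset.card_nsmul_le_sum (Finset.univ.erase q) d 1 (fun x _ => hd x)
      exact_mod_cast this
    have h2 : d q + ∑ x ∈ Finset.univ.erase q, d x = S := by
      rw [hS, Finset.add_sum_erase _ d (Finset.mem_univ q)]
    have h3 : ((Finset.univ.erase q).card : ℤ) = k - 1 := by
      rw [Finset.card_erase_of_mem (Finset.mem_univ q), Finset.card_univ]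
      have : 1 ≤ Fintype.card Q := Fintype.card_pos_iff.2 ⟨q⟩
      push_cast [Nat.cast_sub this]
      ring
    simp only [smul_eq_mul, mul_one] at h1
    rw [h3] at h1
    linarith
  have key : ∑ q, d q * (d q - 1) ≤ (S - (k - 1)) * (S - k) := by
    calc ∑ q, d q * (d q - 1) ≤ ∑ q, (S - (k - 1)) * (d q - 1) := by
          apply Finset.sum_le_sum
          intro q _
          exact mul_le_mul_of_nonneg_right (hbound q) (by linarith [hd q])
      _ = (S - (k - 1)) * (S - k) := by rw [← Finset.mul_sum, hsub]
  have expand : ∑ q, d q * d q = (∑ q, d q * (d q - 1)) + S := by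
    rw [hS, ← Finset.sum_add_distrib]
    apply Finset.sum_congr rfl
    intro q _
    ring
  nlinarith [key, expand]

private theorem nc_eq_card {G : Type*} [Group G] [Fintype G]
    (htc : ∀ g h k : G, g ∉ Subgroup.center G → h ∉ Subgroup.center G →
      k ∉ Subgroup.center G → g * h = h * g → h * k = k * h → g * k = k * g)
    (hna : ∃ a b : G, a * b ≠ b * a) :
    nc G = Nat.card (Quotient (ncSetoid htc)) := by
  classical
  set s := ncSetoid htc with hs
  set Q := Quotient s with hQ
  -- Q is nonempty
  obtain ⟨a, b, hab⟩ := hna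
  have haZ : a ∉ Subgroup.center G := fun h => hab ((Subgroup.mem_center_iff.1 h b).symm)
  have hQne : Nonempty Q := ⟨Quotient.mk s ⟨a, haZ⟩⟩
  obtain ⟨q0⟩ := hQne
  -- the witness set: one representative per class
  set f : G → Q := fun x => if h : x ∉ Subgroup.center G then Quotient.mk s ⟨x, h⟩ else q0
    with hf
  have hub : ∀ n ∈ {n : ℕ | ∃ S : Finset G, S.card = n ∧ (∀ x ∈ S, x ≠ 1) ∧
      ∀ x ∈ S, ∀ y ∈ S, x ≠ y → x * y ≠ y * x}, n ≤ Fintype.card Q := by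
    rintro n ⟨S, rfl, -, hScomm⟩
    by_cases h2 : S.card ≤ 1
    · exact h2.trans (Fintype.card_pos_iff.2 ⟨q0⟩)
    · push_neg at h2
      have hmem : ∀ x ∈ S, x ∉ Subgroup.center G := by
        intro x hx hxZ
        obtain ⟨y, hy, hyx⟩ := Finset.exists_mem_ne h2 x
        exact hScomm y hy x hx hyx ((Subgroup.mem_center_iff.1 hxZ y))
      have hinj : Set.InjOn f S := by
        intro x hx y hy hxy
        rw [hf] at hxy
        simp only [dif_pos (hmem x hx), dif_pos (hmem y hy)] at hxy
        by_contra hne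
        exact hScomm x hx y hy hne (Quotient.exact hxy)
      simpa using Finset.card_le_card_of_injOn f (fun x _ => Finset.mem_univ (f x)) hinj
  have hwit : Fintype.card Q ∈ {n : ℕ | ∃ S : Finset G, S.card = n ∧ (∀ x ∈ S, x ≠ 1) ∧
      ∀ x ∈ S, ∀ y ∈ S, x ≠ y → x * y ≠ y * x} := by
    refine ⟨Finset.univ.image (fun q : Q => (q.out : G)), ?_, ?_, ?_⟩
    · rw [Finset.card_image_of_injective _ (fun q1 q2 h =>
        Quotient.out_inj.1 (Subtype.ext h)), Finset.card_univ]
    · intro x hx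
      obtain ⟨q, -, rfl⟩ := Finset.mem_image.1 hx
      intro h1
      exact q.out.2 (h1 ▸ Subgroup.one_mem _)
    · intro x hx y hy hne hcomm
      obtain ⟨q, -, rfl⟩ := Finset.mem_image.1 hx
      obtain ⟨q', -, rfl⟩ := Finset.mem_image.1 hy
      apply hne
      have : q = q' := by
        rw [← Quotient.out_equiv_out]
        exact hcomm
      rw [this]
  have hle : nc G = Fintype.card Q := le_antisymm (csSup_le ⟨_, hwit⟩ hub)
    (le_csSup ⟨Fintype.card Q, fun n hn => hub n hn⟩ hwit)
  rw [hle, Nat.card_eq_fintype_card]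

private theorem count_comm {G : Type*} [Group G]
    (htc : ∀ g h k : G, g ∉ Subgroup.center G → h ∉ Subgroup.center G →
      k ∉ Subgroup.center G → g * h = h * g → h * k = k * h → g * k = k * g)
    [Fintype G] [DecidableEq G] [∀ x y : G, Decidable (Commute x y)]
    [DecidablePred (· ∈ Subgroup.center G)]
    [Fintype (Quotient (ncSetoid htc))] [DecidableEq (Quotient (ncSetoid htc))] :
    Nat.card (ConjClasses G) * Fintype.card G =
      Fintype.card {x : G // x ∈ Subgroup.center G} * Fintype.card G
      + Fintype.card {x : G // x ∉ Subgroup.center G}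
          * Fintype.card {x : G // x ∈ Subgroup.center G}
      + ∑ q : Quotient (ncSetoid htc),
          (Fintype.card {w : {x : G // x ∉ Subgroup.center G} // Quotient.mk (ncSetoid htc) w = q})
          * (Fintype.card {w : {x : G // x ∉ Subgroup.center G} // Quotient.mk (ncSetoid htc) w = q}) := by
  have h1 : Nat.card (ConjClasses G) * Fintype.card G
      = Fintype.card {p : G × G // Commute p.1 p.2} := by
    rw [← Nat.card_eq_fintype_card (α := G), ← card_comm_eq_card_conjClasses_mul_card,
      Nat.card_eq_fintype_card]
  have h2 : Fintype.card {p : G × G // Commute p.1 p.2}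
      = ∑ x : G, Fintype.card {y : G // Commute x y} := by
    rw [Fintype.card_congr (Equiv.subtypeProdEquivSigmaSubtype Commute), Fintype.card_sigma]
  -- the "always" decomposition of the centralizer of x
  have hsplit : ∀ x : G, Fintype.card {y : G // Commute x y}
      = Fintype.card {x : G // x ∈ Subgroup.center G}
        + Fintype.card {y : {y : G // Commute x y} // ¬ ((y : G) ∈ Subgroup.center G)} := by
    intro x
    rw [← Fintype.card_sum]
    refine Fintype.card_congr ?_
    refine (Equiv.sumCompl (fun y : {y : G // Commute x y} => (y : G) ∈ Subgroup.center G)).symm.trans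
      (Equiv.sumCongr ?_ (Equiv.refl _))
    exact ⟨fun a => ⟨a.1.1, a.2⟩,
      fun b => ⟨⟨b.1, (Subgroup.mem_center_iff.1 b.2 x : _)⟩, b.2⟩,
      fun a => rfl, fun b => rfl⟩
  -- for noncentral x, the complement piece is the commuting class of x
  have hclass : ∀ (x : G) (hx : x ∉ Subgroup.center G),
      Fintype.card {y : {y : G // Commute x y} // ¬ ((y : G) ∈ Subgroup.center G)}
      = Fintype.card {w : {x : G // x ∉ Subgroup.center G} //
          Quotient.mk (ncSetoid htc) w = Quotient.mk (ncSetoid htc) ⟨x, hx⟩} := by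
    intro x hx
    refine Fintype.card_congr ⟨fun a => ⟨⟨a.1.1, a.2⟩, Quotient.sound ?_⟩,
      fun b => ⟨⟨b.1.1, ?_⟩, b.1.2⟩, fun a => rfl, fun b => rfl⟩
    · show (a.1.1 : G) * x = x * a.1.1
      exact a.1.2.symm
    · have hb : (b.1.1 : G) * x = x * b.1.1 := Quotient.exact b.2
      exact hb.symm
  -- centralizer of a central element is everything
  have hcent : ∀ x : G, x ∈ Subgroup.center G →
      Fintype.card {y : G // Commute x y} = Fintype.card G := by
    intro x hx
    exact Fintype.card_congr (Equiv.subtypeUnivEquiv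
      (fun y => ((Subgroup.mem_center_iff.1 hx y).symm : Commute x y)))
  rw [h1, h2]
  rw [← Finset.sum_filter_add_sum_filter_not Finset.univ (· ∈ Subgroup.center G)]
  have hA : ∑ x ∈ Finset.univ.filter (· ∈ Subgroup.center G),
      Fintype.card {y : G // Commute x y}
      = Fintype.card {x : G // x ∈ Subgroup.center G} * Fintype.card G := by
    rw [Finset.sum_congr rfl (fun x hx => hcent x (Finset.mem_filter.1 hx).2),
      Finset.sum_const, smul_eq_mul, Fintype.card_subtype]
  have hBsum : ∑ x ∈ Finset.univ.filter (fun x => ¬ x ∈ Subgroup.center G),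
      Fintype.card {y : G // Commute x y}
      = Fintype.card {x : G // x ∉ Subgroup.center G}
          * Fintype.card {x : G // x ∈ Subgroup.center G}
      + ∑ q : Quotient (ncSetoid htc),
          (Fintype.card {w : {x : G // x ∉ Subgroup.center G} // Quotient.mk (ncSetoid htc) w = q})
          * (Fintype.card {w : {x : G // x ∉ Subgroup.center G} // Quotient.mk (ncSetoid htc) w = q}) := by
    rw [Finset.sum_congr rfl (fun x _ => hsplit x), Finset.sum_add_distrib,
      Finset.sum_const, smul_eq_mul]
    congr 1
    · exact congrArg (· * Fintype.card {x : G // x ∈ Subgroup.center G})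
        (Fintype.card_subtype _).symm
    -- the remaining sum over noncentral x of class sizes
    have e1 : ∑ x ∈ Finset.univ.filter (fun x => ¬ x ∈ Subgroup.center G),
        Fintype.card {y : {y : G // Commute x y} // ¬ ((y : G) ∈ Subgroup.center G)}
        = ∑ w : {x : G // x ∉ Subgroup.center G},
            Fintype.card {y : {y : G // Commute (w : G) y} // ¬ ((y : G) ∈ Subgroup.center G)} := by
      exact (Finset.sum_subtype (p := fun x : G => x ∉ Subgroup.center G)
        (Finset.univ.filter fun x => ¬ x ∈ Subgroup.center G) (fun x => by simp)
        (fun x => Fintype.card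
          {y : {y : G // Commute x y} // ¬ ((y : G) ∈ Subgroup.center G)}))
    rw [e1, Finset.sum_congr rfl (fun w _ => hclass w.1 w.2)]
    rw [← Fintype.sum_fiberwise' (Quotient.mk (ncSetoid htc))
      (fun q => Fintype.card {w : {x : G // x ∉ Subgroup.center G} //
        Quotient.mk (ncSetoid htc) w = q})]
    apply Finset.sum_congr rfl
    intro q _
    rw [Finset.sum_const, smul_eq_mul, Finset.card_univ]
  rw [hA, hBsum, Nat.add_assoc]

/-- For a finite nonabelian TC-group `G` with `m` conjugacy classes:
`nc(G)(nc(G)-1) + |G|(|G|-m) - 2(nc(G)-1)(|G|-|Z(G)|) ≥ 0`. -/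
theorem stmt_19 {G : Type*} [Group G] [Finite G]
    (hna : ∃ a b : G, a * b ≠ b * a)
    (htc : ∀ g h k : G, g ∉ Subgroup.center G → h ∉ Subgroup.center G →
      k ∉ Subgroup.center G → g * h = h * g → h * k = k * h → g * k = k * g) :
    0 ≤ (nc G : ℤ) * ((nc G : ℤ) - 1) +
        (Nat.card G : ℤ) * ((Nat.card G : ℤ) - (Nat.card (ConjClasses G) : ℤ)) -
        2 * ((nc G : ℤ) - 1) * ((Nat.card G : ℤ) - (Nat.card (Subgroup.center G) : ℤ)) := by
  classical
  letI : Fintype G := Fintype.ofFinite G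
  letI : DecidableRel (ncSetoid htc).r := fun a b => Classical.dec _
  letI : Fintype (Quotient (ncSetoid htc)) := Quotient.fintype _
  have hcount := count_comm htc
  have hnc : nc G = Fintype.card (Quotient (ncSetoid htc)) := by
    rw [nc_eq_card htc hna, Nat.card_eq_fintype_card]
  have hNG : (Nat.card G : ℕ) = Fintype.card G := Nat.card_eq_fintype_card
  have hZG : (Nat.card (Subgroup.center G) : ℕ)
      = Fintype.card {x : G // x ∈ Subgroup.center G} := by
    rw [Nat.card_eq_fintype_card]
  have h_csum : ∑ q : Quotient (ncSetoid htc),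
      Fintype.card {w : {x : G // x ∉ Subgroup.center G} // Quotient.mk (ncSetoid htc) w = q}
      = Fintype.card {x : G // x ∉ Subgroup.center G} := by
    rw [← Fintype.card_sigma]
    exact Fintype.card_congr (Equiv.sigmaFiberEquiv _)
  have h_zS : Fintype.card {x : G // x ∈ Subgroup.center G}
      + Fintype.card {x : G // x ∉ Subgroup.center G} = Fintype.card G := by
    rw [← Fintype.card_sum]
    exact Fintype.card_congr (Equiv.sumCompl _)
  have h_cpos : ∀ q : Quotient (ncSetoid htc), 1 ≤ Fintype.card
      {w : {x : G // x ∉ Subgroup.center G} // Quotient.mk (ncSetoid htc) w = q} :=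
    fun q => Fintype.card_pos_iff.2 ⟨⟨q.out, Quotient.out_eq q⟩⟩
  -- pass to the integers
  rw [hnc, hNG, hZG]
  have hint1 : (Nat.card (ConjClasses G) : ℤ) * (Fintype.card G : ℤ)
      = (Fintype.card {x : G // x ∈ Subgroup.center G} : ℤ) * (Fintype.card G : ℤ)
      + (Fintype.card {x : G // x ∉ Subgroup.center G} : ℤ)
          * (Fintype.card {x : G // x ∈ Subgroup.center G} : ℤ)
      + ∑ q : Quotient (ncSetoid htc),
          ((Fintype.card {w : {x : G // x ∉ Subgroup.center G} //
              Quotient.mk (ncSetoid htc) w = q} : ℤ)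
          * (Fintype.card {w : {x : G // x ∉ Subgroup.center G} //
              Quotient.mk (ncSetoid htc) w = q} : ℤ)) := by
    exact_mod_cast congrArg (Nat.cast : ℕ → ℤ) hcount
  have hint2 : (Fintype.card {x : G // x ∈ Subgroup.center G} : ℤ)
      + (Fintype.card {x : G // x ∉ Subgroup.center G} : ℤ) = (Fintype.card G : ℤ) := by
    exact_mod_cast congrArg (Nat.cast : ℕ → ℤ) h_zS
  have hint3 : ∑ q : Quotient (ncSetoid htc),
      ((Fintype.card {w : {x : G // x ∉ Subgroup.center G} //
          Quotient.mk (ncSetoid htc) w = q}) : ℤ)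
      = (Fintype.card {x : G // x ∉ Subgroup.center G} : ℤ) := by
    exact_mod_cast congrArg (Nat.cast : ℕ → ℤ) h_csum
  have hkey := sum_sq_bound
    (fun q : Quotient (ncSetoid htc) =>
      ((Fintype.card {w : {x : G // x ∉ Subgroup.center G} //
          Quotient.mk (ncSetoid htc) w = q}) : ℤ))
    (fun q => by
      show (1 : ℤ) ≤ ((Fintype.card {w : {x : G // x ∉ Subgroup.center G} //
          Quotient.mk (ncSetoid htc) w = q}) : ℤ)
      exact_mod_cast h_cpos q)
  rw [hint3] at hkey
  nlinarith [hkey, hint1, hint2]
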